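/- Let u be a sequence over a finite alphabet and n ∈ ℕ. Suppose i = Ind_u(n) > 0, and let v be the factor of u of length n at position i. Then T(v) ≥ 2. -/

import Mathlib

namespace ReflPaper

variable {A : Type*}

/-- The factor of `u` of length `n` at position `i`: `u(i) u(i+1) ⋯ u(i+n-1)`. -/
def factorAt (u : ℕ → A) (n i : ℕ) : List A :=
  (List.range n).map (fun k => u (i + k))

/-- The word `w` occurs in the sequence `u` at position `i`. -/
def OccursAt (u : ℕ → A) (w : List A) (i : ℕ) : Prop :=
  w = factorAt u w.length i

/-- The language of `u`: the set of all factors of `u`. -/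
def Lang (u : ℕ → A) : Set (List A) := {w | ∃ i, OccursAt u w i}

/-- The set of factors of `u` of length `n`. -/
def LangN (u : ℕ → A) (n : ℕ) : Set (List A) := {w | w.length = n ∧ w ∈ Lang u}

/-- The word `w` occurs infinitely many times in `u`. -/
def OccursInf (u : ℕ → A) (w : List A) : Prop := {i | OccursAt u w i}.Infinite

/-- `u` is eventually periodic. -/
def EventuallyPeriodic (u : ℕ → A) : Prop :=
  ∃ N p : ℕ, 1 ≤ p ∧ ∀ i, N ≤ i → u (i + p) = u i

/-- Two words are reflectively equivalent if one equals the other or its reversal. -/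
def ReflEquiv (w v : List A) : Prop := w = v ∨ w = v.reverse

/-- Reflective equivalence as a setoid on words. -/
def reflSetoid (A : Type*) : Setoid (List A) where
  r := ReflEquiv
  iseqv := by
    constructor
    · intro w; exact Or.inl rfl
    · intro w v h
      rcases h with h | h
      · exact Or.inl h.symm
      · subst h; simp [ReflEquiv]
    · intro w v x h1 h2
      rcases h1 with h1 | h1 <;> rcases h2 with h2 | h2 <;> subst h1 <;>
        simp [ReflEquiv, h2]

/-- The number of reflective-equivalence classes of words in a set `S`. -/
noncomputable def nClasses (S : Set (List A)) : ℕ :=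
  Set.ncard (Quotient.mk (reflSetoid A) '' S)

/-- The reflection complexity `r_u(n)`. -/
noncomputable def reflComplexity (u : ℕ → A) (n : ℕ) : ℕ := nClasses (LangN u n)

/-- The factor complexity `C_u(n) = #L_n(u)`. -/
noncomputable def factorComplexity (u : ℕ → A) (n : ℕ) : ℕ := (LangN u n).ncard

/-- The palindromic complexity `P_u(n)`. -/
noncomputable def palComplexity (u : ℕ → A) (n : ℕ) : ℕ :=
  Set.ncard {w ∈ LangN u n | w.reverse = w}

/-- Both-sided extensions of `w` in the language of `u`. -/
def Bext (u : ℕ → A) (w : List A) : Set (List A) :=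
  {x ∈ Lang u | ∃ a b : A, x = a :: (w ++ [b])}

/-- Right extensions of `w` in the language of `u`. -/
def Rext (u : ℕ → A) (w : List A) : Set (List A) :=
  {x ∈ Lang u | ∃ a : A, x = w ++ [a]}

/-- `T(w)`: the number of reflective-equivalence classes of `Bext(w) ∪ Bext(w̄)`. -/
noncomputable def TT (u : ℕ → A) (w : List A) : ℕ :=
  nClasses (Bext u w ∪ Bext u w.reverse)

/-- `w` is a right special factor of `u`. -/
def RightSpecial (u : ℕ → A) (w : List A) : Prop :=
  ∃ a b : A, a ≠ b ∧ w ++ [a] ∈ Lang u ∧ w ++ [b] ∈ Lang u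

/-- `w` is a left special factor of `u`. -/
def LeftSpecial (u : ℕ → A) (w : List A) : Prop :=
  ∃ a b : A, a ≠ b ∧ a :: w ∈ Lang u ∧ b :: w ∈ Lang u

/-- `u` is Sturmian: `C_u(n) = n + 1` for all `n`. -/
def Sturmian (u : ℕ → A) : Prop := ∀ n, factorComplexity u n = n + 1

/-- `u` is quasi-Sturmian: `C_u(n) = n + c` eventually. -/
def QuasiSturmian (u : ℕ → A) : Prop :=
  ∃ n₀ c : ℕ, ∀ n, n₀ ≤ n → factorComplexity u n = n + c


lemma factorAt_length (u : ℕ → A) (n i : ℕ) : (factorAt u n i).length = n := by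
  simp [factorAt]

lemma factorAt_snoc (u : ℕ → A) (m i : ℕ) :
    factorAt u (m + 1) i = factorAt u m i ++ [u (i + m)] := by
  simp [factorAt, List.range_succ]

lemma factorAt_cons (u : ℕ → A) (m i : ℕ) :
    factorAt u (m + 1) i = u i :: factorAt u m (i + 1) := by
  simp only [factorAt, List.range_succ_eq_map, List.map_cons, List.map_map]
  congr 1
  apply List.map_congr_left
  intro a _
  simp only [Function.comp_apply]
  congr 1
  omega

lemma factorAt_mem_lang (u : ℕ → A) (n i : ℕ) : factorAt u n i ∈ Lang u :=
  ⟨i, by rw [OccursAt, factorAt_length]⟩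

lemma step (u : ℕ → A) (m p q : ℕ)
    (h : ReflEquiv (factorAt u (m + 1) p) (factorAt u (m + 1) q)) :
    factorAt u m p = factorAt u m q ∨
      factorAt u m p = (factorAt u m (q + 1)).reverse := by
  rcases h with h | h
  · left
    rw [factorAt_snoc, factorAt_snoc] at h
    exact (List.append_inj h (by simp [factorAt_length])).1
  · right
    rw [factorAt_snoc, factorAt_cons] at h
    rw [List.reverse_cons] at h
    exact (List.append_inj h (by simp [factorAt_length])).1

/-- if `i = Ind_u(n) > 0` and `v` is the factor of length `n`
at position `i`, then `T(v) ≥ 2`. -/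
theorem stmt5 {A : Type*} [Fintype A] (u : ℕ → A) (n i : ℕ)
    (hleast : IsLeast {i : ℕ | ∃ j : ℕ, i < j ∧
      ReflEquiv (factorAt u (n + 1) i) (factorAt u (n + 1) j)} i)
    (hi : 0 < i) :
    2 ≤ TT u (factorAt u n i) := by
  obtain ⟨i', rfl⟩ : ∃ i', i = i' + 1 := ⟨i - 1, by omega⟩
  obtain ⟨⟨j, hij, hrefl⟩, hlb⟩ := hleast
  set v := factorAt u n (i' + 1) with hv
  -- the key non-equivalence fact
  have key : ∀ q, i' + 1 ≤ q →
      ¬ ReflEquiv (factorAt u (n + 2) i') (factorAt u (n + 2) q) := by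
    intro q hq hcon
    have := step u (n + 1) i' q hcon
    have hmem : i' ∈ {i : ℕ | ∃ j : ℕ, i < j ∧
        ReflEquiv (factorAt u (n + 1) i) (factorAt u (n + 1) j)} := by
      rcases this with h | h
      · exact ⟨q, by omega, Or.inl h⟩
      · exact ⟨q + 1, by omega, Or.inr h⟩
    have := hlb hmem
    omega
  -- x : the left extension at position i'
  set x := factorAt u (n + 2) i' with hx
  have hxform : x = u i' :: (v ++ [u (i' + 1 + n)]) := by
    rw [hx, factorAt_cons, factorAt_snoc]
  have hxB : x ∈ Bext u v :=
    ⟨factorAt_mem_lang u (n + 2) i', u i', u (i' + 1 + n), hxform⟩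
  -- y : another extension, depending on the case
  have hy : ∃ y ∈ Bext u v ∪ Bext u v.reverse, ¬ ReflEquiv x y := by
    rcases hrefl with h | h
    · -- equal occurrence at j
      obtain ⟨j', rfl⟩ : ∃ j', j = j' + 1 := ⟨j - 1, by omega⟩
      refine ⟨factorAt u (n + 2) j', Or.inl ⟨factorAt_mem_lang u (n + 2) j',
        u j', u (i' + 1 + n), ?_⟩, key j' (by omega)⟩
      rw [factorAt_cons, ← h, factorAt_snoc]
    · -- reversed occurrence at j
      refine ⟨factorAt u (n + 2) j, Or.inr ⟨factorAt_mem_lang u (n + 2) j,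
        u (i' + 1 + n), u (j + (n + 1)), ?_⟩, key j (by omega)⟩
      have : factorAt u (n + 2) j = factorAt u (n + 1) j ++ [u (j + (n + 1))] :=
        factorAt_snoc u (n + 1) j
      have h' : factorAt u (n + 1) j = (factorAt u (n + 1) (i' + 1)).reverse := by
        rw [h]; simp
      rw [this, h', factorAt_snoc]
      simp
      exact hv.symm
  obtain ⟨y, hyB, hxy⟩ := hy
  -- finiteness
  have hfin : (Bext u v ∪ Bext u v.reverse).Finite := by
    apply (List.finite_length_eq A (n + 2)).subset
    rintro z (⟨-, a, b, rfl⟩ | ⟨-, a, b, rfl⟩) <;>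
      simp [hv, factorAt_length]
  have hfinQ : ((Quotient.mk (reflSetoid A) '' (Bext u v ∪ Bext u v.reverse))).Finite :=
    hfin.image _
  -- two distinct classes
  have hne : (Quotient.mk (reflSetoid A) x) ≠ (Quotient.mk (reflSetoid A) y) := by
    intro hEq
    exact hxy (Quotient.exact hEq)
  have hsub : {Quotient.mk (reflSetoid A) x, Quotient.mk (reflSetoid A) y} ⊆
      Quotient.mk (reflSetoid A) '' (Bext u v ∪ Bext u v.reverse) := by
    rintro z (rfl | rfl)
    · exact ⟨x, Or.inl hxB, rfl⟩
    · exact ⟨y, hyB, rfl⟩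
  calc 2 = ({Quotient.mk (reflSetoid A) x, Quotient.mk (reflSetoid A) y} :
        Set (Quotient (reflSetoid A))).ncard := (Set.ncard_pair hne).symm
    _ ≤ _ := Set.ncard_le_ncard hsub hfinQ

end ReflPaper
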